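/- arXiv:2409.14528 — 4 statements merged into one kernel-verified Lean document; each statement's English description precedes it below -/
import Mathlib

section
/- Let G be a digraph and let G' be a spanning subgraph of G that is not a multipath. Then G' is minimal by inclusion among spanning subgraphs of G that are not multipaths if and only if G' is the disjoint union of some isolated vertices with either (1) a linear sink or a linear source, or (2) a coherently oriented cycle (possibly a loop). -/
set_option autoImplicit false

noncomputable section

attribute [local instance] Classical.propDecidable

/-- A (finite) directed multigraph: finitely many vertices and edges, each edge
has a source and a target.  (Loops and, a priori, parallel edges are allowed;
the paper's convention of at most one edge between an ordered pair of distinct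
vertices is imposed via `DiGraph.EdgeUnique`.) -/
structure DiGraph where
  V : Type
  E : Type
  [fintV : Fintype V]
  [decV : DecidableEq V]
  [fintE : Fintype E]
  [decE : DecidableEq E]
  s : E → V
  t : E → V

attribute [instance] DiGraph.fintV DiGraph.decV DiGraph.fintE DiGraph.decE

namespace DiGraph

/-- For each ordered pair of *distinct* vertices there is at most one edge. -/
def EdgeUnique (G : DiGraph) : Prop :=
  ∀ e f : G.E, G.s e = G.s f → G.t e = G.t f → G.s e ≠ G.t e → e = f

/-- G has no loops. -/
def Loopless (G : DiGraph) : Prop := ∀ e : G.E, G.s e ≠ G.t e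

/-- A coherently oriented cycle, given as the (cyclically ordered) list of its
edges: the list is nonempty, has no repeated edges, visits no vertex twice,
and the target of each edge is the source of the next one (cyclically).
A loop is a coherently oriented cycle of length 1. -/
def IsCohCycle (G : DiGraph) (c : List G.E) : Prop :=
  c ≠ [] ∧ c.Nodup ∧ (c.map G.s).Nodup ∧
    ∀ i : Fin c.length,
      G.t (c.get i) =
        G.s (c.get ⟨(i.val + 1) % c.length,
          Nat.mod_lt _ (Nat.lt_of_le_of_lt (Nat.zero_le _) i.isLt)⟩)

/-- `m` is (the edge set of) a multipath of `G`: the corresponding spanning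
subgraph has no loops, in-degree and out-degree at most one at each vertex, and
contains no coherently oriented cycle; equivalently, every connected component
is a single vertex or a simple (directed) path. -/
def IsMultipath (G : DiGraph) (m : Finset G.E) : Prop :=
  (∀ e ∈ m, G.s e ≠ G.t e) ∧
  (∀ e ∈ m, ∀ f ∈ m, G.s e = G.s f → e = f) ∧
  (∀ e ∈ m, ∀ f ∈ m, G.t e = G.t f → e = f) ∧
  ¬∃ c : List G.E, IsCohCycle G c ∧ ∀ g ∈ c, g ∈ m

/-- The forbidden pattern (A): vertices v0,v1,v2 and edges (v1,v0), (v0,v2), (v1,v2). -/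
def HasPatternA (G : DiGraph) : Prop :=
  ∃ v0 v1 v2 : G.V, v0 ≠ v1 ∧ v0 ≠ v2 ∧ v1 ≠ v2 ∧
    (∃ e : G.E, G.s e = v1 ∧ G.t e = v0) ∧
    (∃ e : G.E, G.s e = v0 ∧ G.t e = v2) ∧
    (∃ e : G.E, G.s e = v1 ∧ G.t e = v2)

/-- The reverse of pattern (A). -/
def HasPatternArev (G : DiGraph) : Prop :=
  ∃ v0 v1 v2 : G.V, v0 ≠ v1 ∧ v0 ≠ v2 ∧ v1 ≠ v2 ∧
    (∃ e : G.E, G.s e = v0 ∧ G.t e = v1) ∧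
    (∃ e : G.E, G.s e = v2 ∧ G.t e = v0) ∧
    (∃ e : G.E, G.s e = v2 ∧ G.t e = v1)

/-- The forbidden pattern (B): vertices v0,v1,v2,v3 and edges (v0,v1), (v2,v1), (v2,v3). -/
def HasPatternB (G : DiGraph) : Prop :=
  ∃ v0 v1 v2 v3 : G.V,
    v0 ≠ v1 ∧ v0 ≠ v2 ∧ v0 ≠ v3 ∧ v1 ≠ v2 ∧ v1 ≠ v3 ∧ v2 ≠ v3 ∧
    (∃ e : G.E, G.s e = v0 ∧ G.t e = v1) ∧
    (∃ e : G.E, G.s e = v2 ∧ G.t e = v1) ∧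
    (∃ e : G.E, G.s e = v2 ∧ G.t e = v3)

/-- The reverse of pattern (B). -/
def HasPatternBrev (G : DiGraph) : Prop :=
  ∃ v0 v1 v2 v3 : G.V,
    v0 ≠ v1 ∧ v0 ≠ v2 ∧ v0 ≠ v3 ∧ v1 ≠ v2 ∧ v1 ≠ v3 ∧ v2 ≠ v3 ∧
    (∃ e : G.E, G.s e = v1 ∧ G.t e = v0) ∧
    (∃ e : G.E, G.s e = v1 ∧ G.t e = v2) ∧
    (∃ e : G.E, G.s e = v3 ∧ G.t e = v2)

/-- (MP1): G contains no copy, up to reversing all orientations, of the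
patterns (A) and (B). -/
def MP1 (G : DiGraph) : Prop :=
  ¬HasPatternA G ∧ ¬HasPatternArev G ∧ ¬HasPatternB G ∧ ¬HasPatternBrev G

/-- (MP2): every coherently oriented cycle of length ≥ 2 (i.e. loops excluded)
is a connected component: any edge incident to a vertex of the cycle belongs
to the cycle. -/
def MP2 (G : DiGraph) : Prop :=
  ∀ c : List G.E, IsCohCycle G c → 2 ≤ c.length →
    ∀ f : G.E, (∃ g ∈ c, G.s g = G.s f ∨ G.s g = G.t f) → f ∈ c

def IsMPDigraph (G : DiGraph) : Prop := MP1 G ∧ MP2 G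

/-- The axioms (I1), (I2), (I3) for a family of independent sets of a matroid. -/
def IsIndepFamily {α : Type} [DecidableEq α] (I : Finset α → Prop) : Prop :=
  I ∅ ∧ (∀ A B : Finset α, I A → B ⊆ A → I B) ∧
    ∀ A B : Finset α, I A → I B → B.card < A.card →
      ∃ x ∈ A, x ∉ B ∧ I (insert x B)

/-- `m` is the edge set of a linear sink (two non-loop edges with a common
target and distinct sources). -/
def IsLinearSinkSet (G : DiGraph) (m : Finset G.E) : Prop :=
  ∃ e1 e2 : G.E, e1 ≠ e2 ∧ m = {e1, e2} ∧ G.t e1 = G.t e2 ∧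
    G.s e1 ≠ G.s e2 ∧ G.s e1 ≠ G.t e1 ∧ G.s e2 ≠ G.t e2

/-- `m` is the edge set of a linear source (two non-loop edges with a common
source and distinct targets). -/
def IsLinearSourceSet (G : DiGraph) (m : Finset G.E) : Prop :=
  ∃ e1 e2 : G.E, e1 ≠ e2 ∧ m = {e1, e2} ∧ G.s e1 = G.s e2 ∧
    G.t e1 ≠ G.t e2 ∧ G.s e1 ≠ G.t e1 ∧ G.s e2 ≠ G.t e2

/-- `m` is the edge set of a coherently oriented cycle (possibly a loop). -/
def IsCohCycleSet (G : DiGraph) (m : Finset G.E) : Prop :=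
  ∃ c : List G.E, IsCohCycle G c ∧ m = c.toFinset

/-- Two vertices are adjacent if they are the endpoints of a common edge. -/
def adj (G : DiGraph) (v w : G.V) : Prop :=
  ∃ e : G.E, (G.s e = v ∧ G.t e = w) ∨ (G.s e = w ∧ G.t e = v)

/-- Two vertices lie in the same connected component. -/
def connRel (G : DiGraph) : G.V → G.V → Prop := Relation.EqvGen (adj G)

/-- G is connected. -/
def ConnectedD (G : DiGraph) : Prop := Nonempty G.V ∧ ∀ v w : G.V, connRel G v w

/-- The number of connected components of G (isolated vertices count). -/
def numComponents (G : DiGraph) : ℕ :=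
  Nat.card (Quotient (Relation.EqvGen.setoid (adj G)))

/-- `S` is the set of edges of one of the connected components of `G`. -/
def IsComponentEdges (G : DiGraph) (S : Finset G.E) : Prop :=
  ∃ v : G.V, S = Finset.univ.filter (fun e => connRel G v (G.s e))

/-- in-degree of `v` in the subgraph spanned by the edges of `R`. -/
def indegIn (G : DiGraph) (R : Finset G.E) (v : G.V) : ℕ :=
  (R.filter (fun e => G.t e = v)).card

/-- out-degree of `v` in the subgraph spanned by the edges of `R`. -/
def outdegIn (G : DiGraph) (R : Finset G.E) (v : G.V) : ℕ :=
  (R.filter (fun e => G.s e = v)).card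

def indeg (G : DiGraph) (v : G.V) : ℕ := indegIn G Finset.univ v
def outdeg (G : DiGraph) (v : G.V) : ℕ := outdegIn G Finset.univ v

/-- `v` is a vertex of the subgraph spanned by the edge set `R`. -/
def IncidentTo (G : DiGraph) (R : Finset G.E) (v : G.V) : Prop :=
  ∃ e ∈ R, G.s e = v ∨ G.t e = v

/-- `v` is stable in the subgraph spanned by `R`. -/
def StableIn (G : DiGraph) (R : Finset G.E) (v : G.V) : Prop :=
  indegIn G R v = 0 ∨ outdegIn G R v = 0

/-- `v` is unstable in `G`. -/
def UnstableG (G : DiGraph) (v : G.V) : Prop :=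
  0 < indeg G v ∧ 0 < outdeg G v

/-- adjacency within the subgraph spanned by `R`. -/
def adjIn (G : DiGraph) (R : Finset G.E) (a b : G.V) : Prop :=
  ∃ g ∈ R, (G.s g = a ∧ G.t g = b) ∨ (G.s g = b ∧ G.t g = a)

/-- The subgraph spanned by the edge set `R` is connected. -/
def EdgeConnected (G : DiGraph) (R : Finset G.E) : Prop :=
  ∀ e ∈ R, ∀ f ∈ R, Relation.EqvGen (adjIn G R) (G.s e) (G.s f)

/-- `R` spans a dynamical region of `G`: it is connected, has at least one
edge, every boundary vertex is unstable in `G` but stable in `R` and in its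
complement, and no edge of `R` lies on an oriented cycle of `G` not contained
in `R`. -/
def IsDynRegion (G : DiGraph) (R : Finset G.E) : Prop :=
  R.Nonempty ∧ EdgeConnected G R ∧
  (∀ v : G.V, IncidentTo G R v → IncidentTo G (Finset.univ \ R) v →
     UnstableG G v ∧ StableIn G R v ∧ StableIn G (Finset.univ \ R) v) ∧
  (∀ c : List G.E, IsCohCycle G c → (∃ g ∈ c, g ∈ R) → ∀ g ∈ c, g ∈ R)

/-- A dynamical module is a minimal dynamical region. -/
def IsDynModule (G : DiGraph) (R : Finset G.E) : Prop :=
  IsDynRegion G R ∧ ∀ R' ⊆ R, IsDynRegion G R' → R' = R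

/-- `G` is a sink on `n+1` vertices. -/
def IsSinkGraph (G : DiGraph) : Prop :=
  Loopless G ∧ Fintype.card G.V = Fintype.card G.E + 1 ∧
    ∃! v : G.V, ∀ e : G.E, G.t e = v

/-- `G` is a source on `n+1` vertices. -/
def IsSourceGraph (G : DiGraph) : Prop :=
  Loopless G ∧ Fintype.card G.V = Fintype.card G.E + 1 ∧
    ∃! v : G.V, ∀ e : G.E, G.s e = v

/-- `R` spans a sink: all its edges are non-loops with a common target and
pairwise distinct sources. -/
def IsSinkSet (G : DiGraph) (R : Finset G.E) : Prop :=
  ∃ v : G.V, (∀ e ∈ R, G.t e = v ∧ G.s e ≠ v) ∧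
    ∀ e ∈ R, ∀ f ∈ R, G.s e = G.s f → e = f

/-- `R` spans a source. -/
def IsSourceSet (G : DiGraph) (R : Finset G.E) : Prop :=
  ∃ v : G.V, (∀ e ∈ R, G.s e = v ∧ G.t e ≠ v) ∧
    ∀ e ∈ R, ∀ f ∈ R, G.t e = G.t f → e = f

/-- The whole digraph `G` is a coherently oriented cycle. -/
def IsCohCycleGraph (G : DiGraph) : Prop :=
  ∃ c : List G.E, IsCohCycle G c ∧ (∀ e : G.E, e ∈ c) ∧
    ∀ v : G.V, ∃ g ∈ c, G.s g = v

/-- Rank function of the multipath matroid: the size of a largest multipath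
contained in `A`. -/
def mrank (G : DiGraph) (A : Finset G.E) : ℕ :=
  (A.powerset.filter (fun m => IsMultipath G m)).sup Finset.card

/-- The Tutte polynomial of the multipath matroid of `G`, evaluated at `(x,y)`. -/
def tutte (G : DiGraph) (x y : ℤ) : ℤ :=
  ∑ A : Finset G.E,
    (x - 1) ^ (mrank G Finset.univ - mrank G A) *
      (y - 1) ^ (A.card - mrank G A)

/-- `e` is a loop of the multipath matroid. -/
def IsMatroidLoop (G : DiGraph) (e : G.E) : Prop := ¬IsMultipath G {e}

/-- `e` is a coloop of the multipath matroid: it belongs to every maximal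
independent set. -/
def IsColoop (G : DiGraph) (e : G.E) : Prop :=
  ∀ m : Finset G.E, IsMultipath G m →
    (∀ m' : Finset G.E, IsMultipath G m' → m ⊆ m' → m' = m) → e ∈ m

/-- The digraph obtained from `G` by deleting the edge `e`. -/
def deleteEdge (G : DiGraph) (e : G.E) : DiGraph where
  V := G.V
  E := {f : G.E // f ≠ e}
  s := fun f => G.s f.val
  t := fun f => G.t f.val

/-- The vertex set of the MP-contraction `G ⫽ e`: the vertices of `G` other
than the endpoints of `e`, together with a new vertex `x = Sum.inr ()`. -/
def CVert (G : DiGraph) (e : G.E) : Type :=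
  {u : G.V // u ≠ G.s e ∧ u ≠ G.t e} ⊕ Unit

instance (G : DiGraph) (e : G.E) : Fintype (CVert G e) := by
  unfold CVert; infer_instance

instance (G : DiGraph) (e : G.E) : DecidableEq (CVert G e) := by
  unfold CVert; infer_instance

/-- Source, in `G ⫽ e`, of the edge coming from the edge `f` of `G`
(for `e = (v,w)`, the new source is `x` iff `s f ∈ {v,w}` or `t f = w`). -/
def contrS (G : DiGraph) (e f : G.E) : CVert G e :=
  if h : G.s f = G.s e ∨ G.s f = G.t e ∨ G.t f = G.t e then Sum.inr ()
  else Sum.inl ⟨G.s f, by push_neg at h; exact ⟨h.1, h.2.1⟩⟩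

/-- Target, in `G ⫽ e`, of the edge coming from the edge `f` of `G`
(for `e = (v,w)`, the new target is `x` iff `t f ∈ {v,w}` or `s f = v`). -/
def contrT (G : DiGraph) (e f : G.E) : CVert G e :=
  if h : G.t f = G.s e ∨ G.t f = G.t e ∨ G.s f = G.s e then Sum.inr ()
  else Sum.inl ⟨G.t f, by push_neg at h; exact ⟨h.1, h.2.1⟩⟩

/-- The MP-contraction `G ⫽ e`. -/
def mpContract (G : DiGraph) (e : G.E) : DiGraph where
  V := CVert G e
  E := {f : G.E // f ≠ e}
  s := fun f => contrS G e f.val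
  t := fun f => contrT G e f.val

/-- The digraph `C̃_e(G)`: the MP-contraction `G ⫽ e` with all loops at the
new vertex `x` deleted. -/
def tildeC (G : DiGraph) (e : G.E) : DiGraph where
  V := CVert G e
  E := {f : G.E // f ≠ e ∧
         ¬(contrS G e f = Sum.inr () ∧ contrT G e f = Sum.inr ())}
  s := fun f => contrS G e f.val
  t := fun f => contrT G e f.val

/-- The classical contraction `G / e` of a non-loop edge `e = (v,w)`:
identify `w` with `v` and delete `e`. -/
def contractClassical (G : DiGraph) (e : G.E) (hne : G.s e ≠ G.t e) : DiGraph where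
  V := {u : G.V // u ≠ G.t e}
  E := {f : G.E // f ≠ e}
  s := fun f => if h : G.s f.val = G.t e then ⟨G.s e, hne⟩ else ⟨G.s f.val, h⟩
  t := fun f => if h : G.t f.val = G.t e then ⟨G.s e, hne⟩ else ⟨G.t f.val, h⟩

/-- A flowing k-colouring of `G`. -/
def IsFlowing (G : DiGraph) (k : ℕ) (c : G.V → Fin k) : Prop :=
  (∀ e : G.E, c (G.s e) ≠ c (G.t e)) ∧
  (∀ e f : G.E, G.t e = G.t f → c (G.s e) = c (G.s f)) ∧
  (∀ e f : G.E, G.s e = G.s f → c (G.t e) = c (G.t f))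

/-- The number of flowing k-colourings of `G`. -/
def tau (G : DiGraph) (k : ℕ) : ℕ :=
  Nat.card {c : G.V → Fin k // IsFlowing G k c}

/-- The spanning subgraph of `G` with edge set `S`. -/
def subgraphOn (G : DiGraph) (S : Finset G.E) : DiGraph where
  V := G.V
  E := {f : G.E // f ∈ S}
  s := fun f => G.s f.val
  t := fun f => G.t f.val

/-- The underlying undirected multigraph of `G` contains a cycle
(of length ≥ 1; a single loop, or two parallel/antiparallel edges, count). -/
def HasUndirCycle (G : DiGraph) : Prop :=
  ∃ (n : ℕ) (ed : Fin n → G.E) (vx : Fin n → G.V),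
    0 < n ∧ Function.Injective ed ∧ Function.Injective vx ∧
    ∀ i : Fin n,
      (G.s (ed i) = vx i ∧ G.t (ed i) = vx ⟨(i.val + 1) % n, Nat.mod_lt _ i.pos⟩) ∨
      (G.t (ed i) = vx i ∧ G.s (ed i) = vx ⟨(i.val + 1) % n, Nat.mod_lt _ i.pos⟩)

/-- The underlying undirected multigraph of `G` is a forest. -/
def IsForestD (G : DiGraph) : Prop := ¬HasUndirCycle G

/-- The underlying undirected multigraph of `G` is a tree. -/
def IsTreeD (G : DiGraph) : Prop := ConnectedD G ∧ IsForestD G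

/-- The multipath matroid of `G` is representable over the field `F`. -/
def RepOver (G : DiGraph) (F : Type) [Field F] : Prop :=
  ∃ (n : ℕ) (N : Matrix (Fin n) G.E F),
    ∀ m : Finset G.E, IsMultipath G m ↔
      LinearIndependent F (fun f : {x : G.E // x ∈ m} => N.transpose f.val)

end DiGraph

/-- A finite undirected multigraph. -/
structure Multigraph where
  V : Type
  E : Type
  [fintV : Fintype V]
  [decV : DecidableEq V]
  [fintE : Fintype E]
  [decE : DecidableEq E]
  ends : E → Sym2 V

attribute [instance] Multigraph.fintV Multigraph.decV Multigraph.fintE Multigraph.decE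

/-- The multigraph `M` has a cycle all of whose edges lie in `F`. -/
def Multigraph.HasCycleIn (M : Multigraph) (F : Finset M.E) : Prop :=
  ∃ (n : ℕ) (ed : Fin n → M.E) (vx : Fin n → M.V),
    0 < n ∧ Function.Injective ed ∧ Function.Injective vx ∧
    (∀ i : Fin n, ed i ∈ F) ∧
    ∀ i : Fin n, M.ends (ed i) = s(vx i, vx ⟨(i.val + 1) % n, Nat.mod_lt _ i.pos⟩)

section Helpers
open DiGraph

lemma my_mod_succ_inj {n i j : ℕ} (hi : i < n) (hj : j < n)
    (h : (i + 1) % n = (j + 1) % n) : i = j := by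
  rcases Nat.lt_or_ge (i + 1) n with h1 | h1 <;>
    rcases Nat.lt_or_ge (j + 1) n with h2 | h2
  · rw [Nat.mod_eq_of_lt h1, Nat.mod_eq_of_lt h2] at h; omega
  · have hj1 : j + 1 = n := by omega
    rw [Nat.mod_eq_of_lt h1, hj1, Nat.mod_self] at h; omega
  · have hi1 : i + 1 = n := by omega
    rw [hi1, Nat.mod_self, Nat.mod_eq_of_lt h2] at h; omega
  · omega

lemma my_src_inj (G : DiGraph) (c : List G.E) (h : (c.map G.s).Nodup) :
    ∀ i j : Fin c.length, G.s (c.get i) = G.s (c.get j) → i = j := by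
  intro i j hij
  have hinj := List.nodup_iff_injective_get.mp h
  have h2 : (c.map G.s).get ⟨i.1, by simp [i.2]⟩ = (c.map G.s).get ⟨j.1, by simp [j.2]⟩ := by
    simpa [List.getElem_map] using hij
  have h3 := hinj h2
  simp only [Fin.mk.injEq] at h3
  exact Fin.ext h3

lemma my_cycle_tgt_inj (G : DiGraph) (c : List G.E) (hc : G.IsCohCycle c) :
    ∀ i j : Fin c.length, G.t (c.get i) = G.t (c.get j) → i = j := by
  intro i j hij
  rw [hc.2.2.2 i, hc.2.2.2 j] at hij
  have := my_src_inj G c hc.2.2.1 _ _ hij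
  have hv := congrArg Fin.val this
  exact Fin.ext (my_mod_succ_inj i.2 j.2 hv)

lemma my_cycle_nonloop (G : DiGraph) (c : List G.E) (hc : G.IsCohCycle c)
    (hn : 2 ≤ c.length) (i : Fin c.length) : G.s (c.get i) ≠ G.t (c.get i) := by
  intro h
  rw [hc.2.2.2 i] at h
  have := my_src_inj G c hc.2.2.1 _ _ h
  have hv := congrArg Fin.val this
  simp only at hv
  have hi := i.2
  rcases Nat.lt_or_ge (i.1 + 1) c.length with h1 | h1
  · rw [Nat.mod_eq_of_lt h1] at hv; omega
  · have he : i.1 + 1 = c.length := by omega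
    rw [he, Nat.mod_self] at hv
    omega

lemma my_cycle_sub_cycle (G : DiGraph) (c c' : List G.E)
    (hc : G.IsCohCycle c) (hc' : G.IsCohCycle c')
    (hsub : ∀ g ∈ c', g ∈ c) : ∀ g ∈ c, g ∈ c' := by
  have hpos : 0 < c.length := List.length_pos_iff.mpr hc.1
  have step : ∀ j : Fin c.length, c.get j ∈ c' →
      c.get ⟨(j.1 + 1) % c.length, Nat.mod_lt _ hpos⟩ ∈ c' := by
    intro j hj
    obtain ⟨i', hi'⟩ := List.mem_iff_get.mp hj
    have hpos' : 0 < c'.length := List.length_pos_iff.mpr hc'.1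
    set i2 : Fin c'.length := ⟨(i'.1 + 1) % c'.length, Nat.mod_lt _ hpos'⟩ with hi2def
    have hmem : c'.get i2 ∈ c' := List.get_mem c' i2
    obtain ⟨j2, hj2⟩ := List.mem_iff_get.mp (hsub _ hmem)
    have hs : G.s (c.get j2) = G.s (c.get ⟨(j.1 + 1) % c.length, Nat.mod_lt _ hpos⟩) := by
      have h1 := hc'.2.2.2 i'
      rw [hi'] at h1
      rw [hj2, ← h1, hc.2.2.2 j]
    rw [← my_src_inj G c hc.2.2.1 _ _ hs, hj2]
    exact hmem
  obtain ⟨g0, hg0mem⟩ := List.exists_mem_of_ne_nil c' hc'.1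
  obtain ⟨i0, hi0⟩ := List.mem_iff_get.mp (hsub _ hg0mem)
  have key : ∀ k : ℕ, c.get ⟨(i0.1 + k) % c.length, Nat.mod_lt _ hpos⟩ ∈ c' := by
    intro k
    induction k with
    | zero =>
        have hidx : (⟨(i0.1 + 0) % c.length, Nat.mod_lt _ hpos⟩ : Fin c.length) = i0 :=
          Fin.ext (by simp [Nat.mod_eq_of_lt i0.2])
        rw [hidx, hi0]; exact hg0mem
    | succ k ih =>
        have h2 := step _ ih
        have hidx : (⟨(i0.1 + (k + 1)) % c.length, Nat.mod_lt _ hpos⟩ : Fin c.length) =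
            ⟨((i0.1 + k) % c.length + 1) % c.length, Nat.mod_lt _ hpos⟩ := by
          apply Fin.ext
          simp only
          rw [Nat.mod_add_mod, Nat.add_assoc]
        rw [hidx]; exact h2
  intro g hg
  obtain ⟨j, hj⟩ := List.mem_iff_get.mp hg
  have hval : (i0.1 + (c.length - i0.1 + j.1)) % c.length = j.1 := by
    have h1 : i0.1 + (c.length - i0.1 + j.1) = c.length + j.1 := by
      have := i0.2; omega
    rw [h1, Nat.add_mod_left, Nat.mod_eq_of_lt j.2]
  have := key (c.length - i0.1 + j.1)
  rwa [show (⟨(i0.1 + (c.length - i0.1 + j.1)) % c.length, Nat.mod_lt _ hpos⟩ : Fin c.length) = j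
    from Fin.ext hval, hj] at this

lemma my_small_multipath (G : DiGraph) (m : Finset G.E)
    (h1 : ∀ e ∈ m, G.s e ≠ G.t e) (hcard : m.card ≤ 1) : G.IsMultipath m := by
  refine ⟨h1, ?_, ?_, ?_⟩
  · intro e he f hf _; exact Finset.card_le_one.mp hcard e he f hf
  · intro e he f hf _; exact Finset.card_le_one.mp hcard e he f hf
  · rintro ⟨c, ⟨hne, hnd, _, hcyc⟩, hsub⟩
    have hlen : c.length = 1 := by
      have h1' : 1 ≤ c.length := List.length_pos_iff.mpr hne
      have h2' : c.toFinset.card ≤ m.card :=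
        Finset.card_le_card (fun g hg => hsub g (List.mem_toFinset.mp hg))
      rw [List.toFinset_card_of_nodup hnd] at h2'
      omega
    obtain ⟨g, rfl⟩ := List.length_eq_one_iff.mp hlen
    have h3 := hcyc ⟨0, by simp⟩
    simp at h3
    exact h1 g (hsub g (by simp)) h3.symm

end Helpers

open DiGraph in
/-- A spanning subgraph `G'` of `G` (given by its edge set
`m`) which is not a multipath is minimal by inclusion among such if and only if
it is the disjoint union of some isolated vertices with either a linear sink,
a linear source, or a coherently oriented cycle (possibly a loop). -/
theorem minimal_non_multipath_classification (G : DiGraph) (hU : G.EdgeUnique)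
    (m : Finset G.E) (hm : ¬G.IsMultipath m) :
    (∀ m' : Finset G.E, m' ⊂ m → G.IsMultipath m') ↔
      (IsLinearSinkSet G m ∨ IsLinearSourceSet G m ∨ IsCohCycleSet G m) := by
  constructor
  · intro hmin
    have key : ∀ S : Finset G.E, S ⊆ m → ¬G.IsMultipath S → S = m := by
      intro S hsub hS
      by_contra hne
      exact hS (hmin S (lt_of_le_of_ne hsub hne))
    by_cases hloop : ∃ e ∈ m, G.s e = G.t e
    · obtain ⟨e, he, heq⟩ := hloop
      have hEq : ({e} : Finset G.E) = m :=
        key {e} (by simpa using he) (fun h => h.1 e (Finset.mem_singleton_self e) heq)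
      right; right
      refine ⟨[e], ⟨by simp, by simp, by simp, ?_⟩, by simp [← hEq]⟩
      intro i
      have hi : i = ⟨0, by simp⟩ := Fin.ext (by show (i : ℕ) = 0; have h2 : (i : ℕ) < 1 := i.2; omega)
      subst hi
      simpa using heq.symm
    · push_neg at hloop
      by_cases hsrc : ∃ e ∈ m, ∃ f ∈ m, e ≠ f ∧ G.s e = G.s f
      · obtain ⟨e, he, f, hf, hef, hs⟩ := hsrc
        have hEq : ({e, f} : Finset G.E) = m := by
          apply key
          · intro x hx
            rcases Finset.mem_insert.mp hx with rfl | hx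
            · exact he
            · rw [Finset.mem_singleton.mp hx]; exact hf
          · exact fun h => hef (h.2.1 e (by simp) f (by simp) hs)
        right; left
        exact ⟨e, f, hef, hEq.symm, hs,
          fun ht => hef (hU e f hs ht (hloop e he)), hloop e he, hloop f hf⟩
      · by_cases htgt : ∃ e ∈ m, ∃ f ∈ m, e ≠ f ∧ G.t e = G.t f
        · obtain ⟨e, he, f, hf, hef, ht⟩ := htgt
          have hEq : ({e, f} : Finset G.E) = m := by
            apply key
            · intro x hx
              rcases Finset.mem_insert.mp hx with rfl | hx
              · exact he
              · rw [Finset.mem_singleton.mp hx]; exact hf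
            · exact fun h => hef (h.2.2.1 e (by simp) f (by simp) ht)
          left
          exact ⟨e, f, hef, hEq.symm, ht,
            fun hs => hef (hU e f hs ht (hloop e he)), hloop e he, hloop f hf⟩
        · push_neg at hsrc htgt
          have hcyc : ∃ c : List G.E, G.IsCohCycle c ∧ ∀ g ∈ c, g ∈ m := by
            by_contra hno
            exact hm ⟨hloop,
              fun e he f hf h => by_contra fun hne => hsrc e he f hf hne h,
              fun e he f hf h => by_contra fun hne => htgt e he f hf hne h, hno⟩
          obtain ⟨c, hc, hcm⟩ := hcyc
          have hEq : c.toFinset = m :=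
            key _ (fun g hg => hcm g (List.mem_toFinset.mp hg))
              (fun h => h.2.2.2 ⟨c, hc, fun g hg => List.mem_toFinset.mpr hg⟩)
          right; right
          exact ⟨c, hc, hEq.symm⟩
  · rintro (⟨e1, e2, hne, rfl, hts, hss, hl1, hl2⟩ | ⟨e1, e2, hne, rfl, hss, hts, hl1, hl2⟩ |
      ⟨c, hc, rfl⟩) <;> intro m' hm'
    · apply my_small_multipath
      · intro e he
        have hmem := hm'.subset he
        rcases Finset.mem_insert.mp hmem with rfl | hmem
        · exact hl1
        · rw [Finset.mem_singleton.mp hmem]; exact hl2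
      · have h2 : ({e1, e2} : Finset G.E).card = 2 := Finset.card_pair hne
        have h3 := Finset.card_lt_card hm'
        omega
    · apply my_small_multipath
      · intro e he
        have hmem := hm'.subset he
        rcases Finset.mem_insert.mp hmem with rfl | hmem
        · exact hl1
        · rw [Finset.mem_singleton.mp hmem]; exact hl2
      · have h2 : ({e1, e2} : Finset G.E).card = 2 := Finset.card_pair hne
        have h3 := Finset.card_lt_card hm'
        omega
    · obtain ⟨hsubm, hnsub⟩ := Finset.ssubset_def.mp hm'
      by_cases hn : 2 ≤ c.length
      · refine ⟨?_, ?_, ?_, ?_⟩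
        · intro e he
          obtain ⟨i, hi⟩ := List.mem_iff_get.mp (List.mem_toFinset.mp (hsubm he))
          rw [← hi]
          exact my_cycle_nonloop G c hc hn i
        · intro e he f hf hs
          obtain ⟨i, hi⟩ := List.mem_iff_get.mp (List.mem_toFinset.mp (hsubm he))
          obtain ⟨j, hj⟩ := List.mem_iff_get.mp (List.mem_toFinset.mp (hsubm hf))
          rw [← hi, ← hj] at hs ⊢
          rw [my_src_inj G c hc.2.2.1 i j hs]
        · intro e he f hf ht
          obtain ⟨i, hi⟩ := List.mem_iff_get.mp (List.mem_toFinset.mp (hsubm he))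
          obtain ⟨j, hj⟩ := List.mem_iff_get.mp (List.mem_toFinset.mp (hsubm hf))
          rw [← hi, ← hj] at ht ⊢
          rw [my_cycle_tgt_inj G c hc i j ht]
        · rintro ⟨c', hc', hsub⟩
          have hall := my_cycle_sub_cycle G c c' hc hc'
            (fun g hg => List.mem_toFinset.mp (hsubm (hsub g hg)))
          exact hnsub (fun g hg => hsub g (hall g (List.mem_toFinset.mp hg)))
      · have hlen : c.length = 1 := by
          have := List.length_pos_iff.mpr hc.1; omega
        obtain ⟨g, rfl⟩ := List.length_eq_one_iff.mp hlen
        have hempty : m' = ∅ := by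
          have : m' ⊂ {g} := by simpa using hm'
          exact Finset.eq_empty_of_ssubset_singleton this
        subst hempty
        exact my_small_multipath G ∅ (by simp) (by simp)
end
end

section
/- Let G be a digraph such that the pair M_G = (E(G), Mult(G)) is a matroid. Then the circuits of M_G (its minimal dependent sets) are exactly the edge sets of subgraphs of G that are linear sinks, linear sources, or coherently oriented cycles (including loops). -/
set_option autoImplicit false

noncomputable section

attribute [local instance] Classical.propDecidable

namespace DiGraph

lemma multipath_mono {G : DiGraph} {m m' : Finset G.E} (h : m' ⊆ m)
    (hm : G.IsMultipath m) : G.IsMultipath m' := by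
  obtain ⟨h1, h2, h3, h4⟩ := hm
  refine ⟨fun e he => h1 e (h he), fun e he f hf => h2 e (h he) f (h hf),
    fun e he f hf => h3 e (h he) f (h hf), ?_⟩
  rintro ⟨c, hc, hsub⟩
  exact h4 ⟨c, hc, fun g hg => h (hsub g hg)⟩

lemma multipath_singleton {G : DiGraph} {e : G.E} (h : G.s e ≠ G.t e) :
    G.IsMultipath {e} := by
  refine ⟨?_, ?_, ?_, ?_⟩
  · intro f hf; rw [Finset.mem_singleton] at hf; subst hf; exact h
  · intro a ha b hb _; rw [Finset.mem_singleton] at ha hb; rw [ha, hb]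
  · intro a ha b hb _; rw [Finset.mem_singleton] at ha hb; rw [ha, hb]
  · rintro ⟨c, ⟨hne, _, _, hcyc⟩, hsub⟩
    have hlen : 0 < c.length := List.length_pos_of_ne_nil hne
    set i : Fin c.length := ⟨0, hlen⟩
    have h1 : c.get i ∈ ({e} : Finset G.E) := hsub _ (c.get_mem _)
    have h2 : c.get ⟨(i.val + 1) % c.length, Nat.mod_lt _ hlen⟩ ∈ ({e} : Finset G.E) :=
      hsub _ (c.get_mem _)
    rw [Finset.mem_singleton] at h1 h2
    have := hcyc i
    rw [h1, h2] at this
    exact h (this.symm)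

lemma cohCycle_loop {G : DiGraph} {e : G.E} (h : G.s e = G.t e) :
    IsCohCycle G [e] := by
  refine ⟨by simp, by simp, by simp, ?_⟩
  intro i
  have hi : i = ⟨0, by simp⟩ := by
    have := i.isLt; ext; simpa using Nat.lt_one_iff.mp (by simpa using this)
  subst hi
  simp [h]

lemma not_multipath_of_cycle {G : DiGraph} {c : List G.E} {m : Finset G.E}
    (hc : IsCohCycle G c) (h : ∀ g ∈ c, g ∈ m) : ¬G.IsMultipath m :=
  fun hm => hm.2.2.2 ⟨c, hc, h⟩

lemma succ_mod_inj {n i j : ℕ} (hi : i < n) (hj : j < n)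
    (h : (i + 1) % n = (j + 1) % n) : i = j := by
  rcases Nat.lt_or_ge (i + 1) n with h1 | h1
  · rw [Nat.mod_eq_of_lt h1] at h
    rcases Nat.lt_or_ge (j + 1) n with h2 | h2
    · rw [Nat.mod_eq_of_lt h2] at h; omega
    · have hj1 : j + 1 = n := by omega
      rw [hj1, Nat.mod_self] at h; omega
  · have hi1 : i + 1 = n := by omega
    rw [hi1, Nat.mod_self] at h
    rcases Nat.lt_or_ge (j + 1) n with h2 | h2
    · rw [Nat.mod_eq_of_lt h2] at h; omega
    · omega

lemma src_inj {G : DiGraph} {c : List G.E} (hc : IsCohCycle G c)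
    (i j : Fin c.length) (h : G.s (c.get i) = G.s (c.get j)) : i = j := by
  have hnd := hc.2.2.1
  have hinj := List.nodup_iff_injective_get.mp hnd
  have hi : (i.val : ℕ) < (c.map G.s).length := by simpa using i.isLt
  have hj : (j.val : ℕ) < (c.map G.s).length := by simpa using j.isLt
  have e1 : (c.map G.s).get ⟨i.val, hi⟩ = G.s (c.get i) := by simp
  have e2 : (c.map G.s).get ⟨j.val, hj⟩ = G.s (c.get j) := by simp
  have := hinj (by rw [e1, e2]; exact h : (c.map G.s).get ⟨i.val, hi⟩ = (c.map G.s).get ⟨j.val, hj⟩)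
  have hv := congrArg Fin.val this
  simp only at hv
  exact Fin.ext hv

lemma cycle_mem_cycle {G : DiGraph} {c c' : List G.E} (hc : IsCohCycle G c)
    (hc' : IsCohCycle G c') (hsub : ∀ g ∈ c', g ∈ c) : ∀ g ∈ c, g ∈ c' := by
  have hn : 0 < c.length := List.length_pos_of_ne_nil hc.1
  have hm : 0 < c'.length := List.length_pos_of_ne_nil hc'.1
  -- step
  have step : ∀ (i : Fin c'.length) (j : Fin c.length), c'.get i = c.get j →
      c'.get ⟨(i.val + 1) % c'.length, Nat.mod_lt _ hm⟩ =
        c.get ⟨(j.val + 1) % c.length, Nat.mod_lt _ hn⟩ := by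
    intro i j hij
    have h1 := hc'.2.2.2 i
    have h2 := hc.2.2.2 j
    rw [hij] at h1
    have hmem : c'.get ⟨(i.val + 1) % c'.length, Nat.mod_lt _ hm⟩ ∈ c :=
      hsub _ (c'.get_mem _)
    obtain ⟨k, hk⟩ := List.mem_iff_get.mp hmem
    have : G.s (c.get k) = G.s (c.get ⟨(j.val + 1) % c.length, Nat.mod_lt _ hn⟩) := by
      rw [hk, ← h1, h2]
    have := src_inj hc _ _ this
    rw [← hk, this]
  -- base
  obtain ⟨j0, hj0⟩ := List.mem_iff_get.mp (hsub _ (List.get_mem c' ⟨0, hm⟩))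
  -- iterate
  have iter : ∀ k : ℕ, c.get ⟨(j0.val + k) % c.length, Nat.mod_lt _ hn⟩ ∈ c' := by
    intro k
    induction k with
    | zero =>
        have : (j0.val + 0) % c.length = j0.val := by
          simpa using Nat.mod_eq_of_lt j0.isLt
        rw [show (⟨(j0.val + 0) % c.length, Nat.mod_lt _ hn⟩ : Fin c.length) = j0 from
          Fin.ext this, hj0]
        exact List.get_mem _ _
    | succ k ih =>
        obtain ⟨i, hi⟩ := List.mem_iff_get.mp ih
        have := step i _ hi
        have heq : ((j0.val + k) % c.length + 1) % c.length =
            (j0.val + (k + 1)) % c.length := by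
          rw [Nat.mod_add_mod]; ring_nf
        rw [show (⟨((j0.val + k) % c.length + 1) % c.length, Nat.mod_lt _ hn⟩ :
            Fin c.length) = ⟨(j0.val + (k + 1)) % c.length, Nat.mod_lt _ hn⟩ from
          Fin.ext heq] at this
        rw [← this]
        exact List.get_mem _ _
  intro g hg
  obtain ⟨j, hj⟩ := List.mem_iff_get.mp hg
  have hk : (j0.val + (c.length - j0.val + j.val)) % c.length = j.val := by
    have h1 : j0.val + (c.length - j0.val + j.val) = c.length + j.val := by
      have := j0.isLt; omega
    rw [h1, Nat.add_mod_left, Nat.mod_eq_of_lt j.isLt]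
  have := iter (c.length - j0.val + j.val)
  rw [show (⟨(j0.val + (c.length - j0.val + j.val)) % c.length, Nat.mod_lt _ hn⟩ :
      Fin c.length) = j from Fin.ext hk, hj] at this
  exact this

end DiGraph
open DiGraph in
/-- If `(E(G), Mult(G))` is a matroid, then its circuits
(minimal dependent sets) are exactly the edge sets of subgraphs of `G` which
are linear sinks, linear sources, or coherently oriented cycles (incl. loops). -/
theorem circuits_of_multipath_matroid (G : DiGraph) (hU : G.EdgeUnique)
    (hmat : IsIndepFamily (fun m : Finset G.E => G.IsMultipath m))
    (C : Finset G.E) :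
    (¬G.IsMultipath C ∧ ∀ C' : Finset G.E, C' ⊂ C → G.IsMultipath C') ↔
      (IsLinearSinkSet G C ∨ IsLinearSourceSet G C ∨ IsCohCycleSet G C) := by
  constructor
  · rintro ⟨hdep, hmin⟩
    have dep_eq : ∀ D : Finset G.E, D ⊆ C → ¬G.IsMultipath D → D = C := by
      intro D hDC hD
      by_contra hne
      exact hD (hmin D (lt_of_le_of_ne hDC hne))
    by_cases h1 : ∀ e ∈ C, G.s e ≠ G.t e
    · by_cases h2 : ∀ e ∈ C, ∀ f ∈ C, G.s e = G.s f → e = f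
      · by_cases h3 : ∀ e ∈ C, ∀ f ∈ C, G.t e = G.t f → e = f
        · -- must contain a cycle
          have hcyc : ∃ c : List G.E, IsCohCycle G c ∧ ∀ g ∈ c, g ∈ C := by
            by_contra h4
            exact hdep ⟨h1, h2, h3, h4⟩
          obtain ⟨c, hc, hsub⟩ := hcyc
          right; right
          refine ⟨c, hc, ?_⟩
          have hsub' : c.toFinset ⊆ C := by
            intro g hg; exact hsub g (List.mem_toFinset.mp hg)
          have hdep2 : ¬G.IsMultipath c.toFinset :=
            DiGraph.not_multipath_of_cycle hc (fun g hg => List.mem_toFinset.mpr hg)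
          exact (dep_eq c.toFinset hsub' hdep2).symm
        · push_neg at h3
          obtain ⟨e, he, f, hf, htt, hef⟩ := h3
          have hse : G.s e ≠ G.t e := h1 e he
          have hsf : G.s f ≠ G.t f := h1 f hf
          have hss : G.s e ≠ G.s f := fun h => hef (hU e f h htt hse)
          have hCe : C = {e, f} := by
            refine (dep_eq {e, f} ?_ ?_).symm
            · intro x hx
              rcases Finset.mem_insert.mp hx with h | h
              · rw [h]; exact he
              · rw [Finset.mem_singleton.mp h]; exact hf
            · intro hmp
              exact hef (hmp.2.2.1 e (Finset.mem_insert_self _ _) f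
                (Finset.mem_insert_of_mem (Finset.mem_singleton_self _)) htt)
          left
          exact ⟨e, f, hef, hCe, htt, hss, hse, hsf⟩
      · push_neg at h2
        obtain ⟨e, he, f, hf, hss, hef⟩ := h2
        have hse : G.s e ≠ G.t e := h1 e he
        have hsf : G.s f ≠ G.t f := h1 f hf
        have htt : G.t e ≠ G.t f := fun h => hef (hU e f hss h hse)
        have hCe : C = {e, f} := by
          refine (dep_eq {e, f} ?_ ?_).symm
          · intro x hx
            rcases Finset.mem_insert.mp hx with h | h
            · rw [h]; exact he
            · rw [Finset.mem_singleton.mp h]; exact hf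
          · intro hmp
            exact hef (hmp.2.1 e (Finset.mem_insert_self _ _) f
              (Finset.mem_insert_of_mem (Finset.mem_singleton_self _)) hss)
        right; left
        exact ⟨e, f, hef, hCe, hss, htt, hse, hsf⟩
    · push_neg at h1
      obtain ⟨e, he, hloop⟩ := h1
      have hcyc : IsCohCycle G [e] := DiGraph.cohCycle_loop hloop
      have hCe : C = {e} := by
        refine (dep_eq {e} (Finset.singleton_subset_iff.mpr he) ?_).symm
        exact DiGraph.not_multipath_of_cycle hcyc
          (by intro g hg; rw [List.mem_singleton.mp hg]; exact Finset.mem_singleton_self e)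
      right; right
      exact ⟨[e], hcyc, by simp [hCe]⟩
  · intro h
    rcases h with ⟨e1, e2, hne, hCe, htt, hss, h1, h2⟩ | ⟨e1, e2, hne, hCe, hss, htt, h1, h2⟩ | ⟨c, hc, hCe⟩
    · subst hCe
      constructor
      · intro hmp
        exact hne (hmp.2.2.1 e1 (Finset.mem_insert_self _ _) e2
          (Finset.mem_insert_of_mem (Finset.mem_singleton_self _)) htt)
      · intro C' hC'
        obtain ⟨x, hxC, hxC'⟩ := Finset.exists_of_ssubset hC'
        rcases Finset.mem_insert.mp hxC with hx | hx
        · subst hx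
          refine DiGraph.multipath_mono ?_ (DiGraph.multipath_singleton h2)
          intro y hy
          rcases Finset.mem_insert.mp (hC'.1 hy) with h | h
          · exact absurd (h ▸ hy) hxC'
          · exact h
        · rw [Finset.mem_singleton.mp hx] at hxC'
          refine DiGraph.multipath_mono ?_ (DiGraph.multipath_singleton h1)
          intro y hy
          rcases Finset.mem_insert.mp (hC'.1 hy) with h | h
          · exact Finset.mem_singleton.mpr h
          · exact absurd ((Finset.mem_singleton.mp h) ▸ hy) hxC'
    · subst hCe
      constructor
      · intro hmp
        exact hne (hmp.2.1 e1 (Finset.mem_insert_self _ _) e2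
          (Finset.mem_insert_of_mem (Finset.mem_singleton_self _)) hss)
      · intro C' hC'
        obtain ⟨x, hxC, hxC'⟩ := Finset.exists_of_ssubset hC'
        rcases Finset.mem_insert.mp hxC with hx | hx
        · subst hx
          refine DiGraph.multipath_mono ?_ (DiGraph.multipath_singleton h2)
          intro y hy
          rcases Finset.mem_insert.mp (hC'.1 hy) with h | h
          · exact absurd (h ▸ hy) hxC'
          · exact h
        · rw [Finset.mem_singleton.mp hx] at hxC'
          refine DiGraph.multipath_mono ?_ (DiGraph.multipath_singleton h1)
          intro y hy
          rcases Finset.mem_insert.mp (hC'.1 hy) with h | h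
          · exact Finset.mem_singleton.mpr h
          · exact absurd ((Finset.mem_singleton.mp h) ▸ hy) hxC'
    · subst hCe
      have hn : 0 < c.length := List.length_pos_of_ne_nil hc.1
      constructor
      · exact DiGraph.not_multipath_of_cycle hc (fun g hg => List.mem_toFinset.mpr hg)
      · intro C' hC'
        have hnocyc : ¬∃ c' : List G.E, IsCohCycle G c' ∧ ∀ g ∈ c', g ∈ C' := by
          rintro ⟨c', hc', hsub'⟩
          have hsubc : ∀ g ∈ c', g ∈ c := fun g hg =>
            List.mem_toFinset.mp (hC'.1 (hsub' g hg))
          have hall := DiGraph.cycle_mem_cycle hc hc' hsubc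
          refine hC'.not_subset ?_
          intro g hg
          exact hsub' g (hall g (List.mem_toFinset.mp hg))
        have memidx : ∀ g ∈ C', ∃ j : Fin c.length, c.get j = g := by
          intro g hg
          exact List.mem_iff_get.mp (List.mem_toFinset.mp (hC'.1 hg))
        refine ⟨?_, ?_, ?_, hnocyc⟩
        · intro e he hloop
          exact hnocyc ⟨[e], DiGraph.cohCycle_loop hloop,
            by intro g hg; rw [List.mem_singleton.mp hg]; exact he⟩
        · intro e he f hf hss
          obtain ⟨i, hi⟩ := memidx e he
          obtain ⟨j, hj⟩ := memidx f hf
          rw [← hi, ← hj] at hss ⊢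
          rw [DiGraph.src_inj hc i j hss]
        · intro e he f hf htt
          obtain ⟨i, hi⟩ := memidx e he
          obtain ⟨j, hj⟩ := memidx f hf
          rw [← hi, ← hj] at htt ⊢
          rw [hc.2.2.2 i, hc.2.2.2 j] at htt
          have := DiGraph.src_inj hc _ _ htt
          have hv : (i.val + 1) % c.length = (j.val + 1) % c.length :=
            congrArg Fin.val this
          rw [show i = j from Fin.ext (DiGraph.succ_mod_inj i.isLt j.isLt hv)]
end
end

section
/- For every MP-digraph G, the multipath matroid M_G is a binary matroid, i.e., it is representable over the two-element field F_2. -/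
set_option autoImplicit false

noncomputable section

attribute [local instance] Classical.propDecidable

namespace MPAux
open DiGraph

/-- `e` lies on a coherently oriented cycle of length at least 2. -/
def OnCyc (G : DiGraph) (e : G.E) : Prop :=
  ∃ c : List G.E, G.IsCohCycle c ∧ 2 ≤ c.length ∧ e ∈ c

/-- Two non-loop edges sharing a source or a target. -/
def Rel (G : DiGraph) (e f : G.E) : Prop :=
  G.s e ≠ G.t e ∧ G.s f ≠ G.t f ∧ (G.s e = G.s f ∨ G.t e = G.t f)

/-- Equivalence generated by `Rel`. -/
def Cls (G : DiGraph) (e f : G.E) : Prop := Relation.EqvGen (Rel G) e f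

/-- The representing vector of an edge. -/
def vec (G : DiGraph) (e : G.E) : (G.V ⊕ G.E) → ZMod 2 :=
  if G.s e = G.t e then 0
  else if OnCyc G e then
    Sum.elim (fun v => (if G.s e = v then 1 else 0) + (if G.t e = v then 1 else 0))
      (fun _ => 0)
  else
    Sum.elim (fun _ => 0) (fun f => if Cls G e f then 1 else 0)

section CycleLemmas

variable {G : DiGraph} {c : List G.E}

lemma s_get_inj (hc : G.IsCohCycle c) {i j : Fin c.length}
    (h : G.s (c.get i) = G.s (c.get j)) : i = j := by
  have hn := hc.2.2.1
  rw [List.nodup_iff_injective_get] at hn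
  have hi : (i.val) < (c.map G.s).length := by simpa using i.isLt
  have hj : (j.val) < (c.map G.s).length := by simpa using j.isLt
  have h2 : (c.map G.s).get ⟨i.val, hi⟩ = (c.map G.s).get ⟨j.val, hj⟩ := by
    simp only [List.get_eq_getElem, List.getElem_map]
    simpa using h
  have := hn h2
  exact Fin.ext (by simpa [Fin.ext_iff] using this)

/-- the successor index on a cycle -/
def nxt {n : ℕ} (hn : 0 < n) (i : Fin n) : Fin n := ⟨(i.val + 1) % n, Nat.mod_lt _ hn⟩

lemma t_get (hc : G.IsCohCycle c) (i : Fin c.length) :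
    G.t (c.get i) = G.s (c.get (nxt (i.pos) i)) := hc.2.2.2 i

lemma t_get' (hc : G.IsCohCycle c) (hn : 0 < c.length) (i : Fin c.length) :
    G.t (c.get i) = G.s (c.get (nxt hn i)) := hc.2.2.2 i

lemma nxt_val {n : ℕ} (hn : 0 < n) (i : Fin n) :
    (nxt hn i).val = if i.val + 1 = n then 0 else i.val + 1 := by
  have hi := i.isLt
  rcases Nat.lt_or_ge (i.val + 1) n with h | h
  · simp [nxt, Nat.mod_eq_of_lt h, Nat.ne_of_lt h]
  · have he : i.val + 1 = n := by omega
    simp [nxt, he]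

lemma nxt_inj {n : ℕ} (hn : 0 < n) {i j : Fin n} (h : nxt hn i = nxt hn j) : i = j := by
  have hi := i.isLt; have hj := j.isLt
  have h' := congrArg Fin.val h
  rw [nxt_val, nxt_val] at h'
  apply Fin.ext
  split_ifs at h' <;> omega

lemma t_get_inj (hc : G.IsCohCycle c) {i j : Fin c.length}
    (h : G.t (c.get i) = G.t (c.get j)) : i = j := by
  rw [t_get hc, t_get hc] at h
  exact nxt_inj _ (s_get_inj hc h)

lemma cyc_nonloop (hc : G.IsCohCycle c) (hlen : 2 ≤ c.length) (i : Fin c.length) :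
    G.s (c.get i) ≠ G.t (c.get i) := by
  rw [t_get hc]
  intro h
  have := s_get_inj hc h
  have h' := congrArg Fin.val this
  rw [nxt_val] at h'
  split_ifs at h' <;> omega

lemma cyc_nonloop' (hc : G.IsCohCycle c) (hlen : 2 ≤ c.length) {e : G.E} (he : e ∈ c) :
    G.s e ≠ G.t e := by
  obtain ⟨i, rfl⟩ := List.mem_iff_get.mp he
  exact cyc_nonloop hc hlen i

end CycleLemmas

/-- Structure of the equivalence classes: MP1 forces any two equivalent edges
to share a source or a target. -/
lemma cls_struct (G : DiGraph) (hU : G.EdgeUnique) (h1 : G.MP1) {e f : G.E}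
    (h : Cls G e f) :
    e = f ∨ (G.s e ≠ G.t e ∧ G.s f ≠ G.t f ∧ (G.s e = G.s f ∨ G.t e = G.t f)) := by
  induction h with
  | rel x y hxy => exact Or.inr hxy
  | refl x => exact Or.inl rfl
  | symm x y hxy ih =>
    rcases ih with h | ⟨hx, hy, h⟩
    · exact Or.inl h.symm
    · exact Or.inr ⟨hy, hx, h.elim (fun h => Or.inl h.symm) (fun h => Or.inr h.symm)⟩
  | trans x y z hxy hyz ih1 ih2 =>
    rcases ih1 with rfl | ⟨hnx, hny, hxy'⟩
    · exact ih2
    rcases ih2 with rfl | ⟨hny', hnz, hyz'⟩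
    · exact Or.inr ⟨hnx, hny, hxy'⟩
    by_cases hxz : x = z
    · exact Or.inl hxz
    by_cases hs : G.s x = G.s z
    · exact Or.inr ⟨hnx, hnz, Or.inl hs⟩
    by_cases ht : G.t x = G.t z
    · exact Or.inr ⟨hnx, hnz, Or.inr ht⟩
    exfalso
    rcases hxy' with hsxy | htxy <;> rcases hyz' with hsyz | htyz
    · exact hs (hsxy.trans hsyz)
    · -- s x = s y, t y = t z : case 4
      by_cases hxy0 : x = y
      · exact ht (hxy0 ▸ htyz)
      by_cases hyz0 : y = z
      · exact hs (hsxy.trans (hyz0 ▸ rfl))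
      have hvw : G.t x ≠ G.t y := by
        intro h'
        exact hxy0 (hU x y hsxy h' hnx)
      have hab : G.s x ≠ G.s z := hs
      by_cases hvb : G.t x = G.s z
      · -- Arev with v0 = t x, v1 = t y, v2 = s x
        exact h1.2.1 ⟨G.t x, G.t y, G.s x, hvw, fun h' => hnx h'.symm,
          fun h' => hny (hsxy.symm.trans h'.symm),
          ⟨z, hvb.symm, htyz.symm⟩, ⟨x, rfl, rfl⟩, ⟨y, hsxy.symm, rfl⟩⟩
      · -- Brev with v0 = t x, v1 = s x, v2 = t y, v3 = s z
        exact h1.2.2.2 ⟨G.t x, G.s x, G.t y, G.s z,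
          fun h' => hnx h'.symm, hvw, hvb,
          fun h' => hny (hsxy.symm.trans h'), hab,
          fun h' => hnz (by rw [← h', htyz]),
          ⟨x, rfl, rfl⟩, ⟨y, hsxy.symm, rfl⟩, ⟨z, rfl, htyz.symm⟩⟩
    · -- t x = t y, s y = s z : case 3
      by_cases hxy0 : x = y
      · exact hs (hxy0 ▸ hsyz)
      by_cases hyz0 : y = z
      · exact ht (htxy.trans (hyz0 ▸ rfl))
      have hab : G.s x ≠ G.s y := by
        intro h'
        exact hxy0 (hU x y h' htxy hnx)
      have hvw : G.t x ≠ G.t z := ht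
      by_cases haw : G.s x = G.t z
      · -- A with v0 = s x, v1 = s y, v2 = t x
        exact h1.1 ⟨G.s x, G.s y, G.t x, hab, hnx,
          fun h' => hny (h'.trans htxy),
          ⟨z, hsyz.symm, haw.symm⟩, ⟨x, rfl, rfl⟩, ⟨y, rfl, htxy.symm⟩⟩
      · -- B with v0 = s x, v1 = t x, v2 = s y, v3 = t z
        exact h1.2.2.1 ⟨G.s x, G.t x, G.s y, G.t z,
          hnx, hab, haw,
          fun h' => hny (h'.symm.trans htxy), hvw,
          fun h' => hnz (hsyz.symm.trans h'),
          ⟨x, rfl, rfl⟩, ⟨y, rfl, htxy.symm⟩, ⟨z, hsyz.symm, rfl⟩⟩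
    · exact ht (htxy.trans htyz)


/-- rotation by one on `Fin n`. -/
def rotEquiv {n : ℕ} (hn : 0 < n) : Fin n ≃ Fin n where
  toFun := nxt hn
  invFun j := ⟨(j.val + (n - 1)) % n, Nat.mod_lt _ hn⟩
  left_inv j := by
    apply Fin.ext
    show ((j.val + 1) % n + (n - 1)) % n = j.val
    rw [Nat.mod_add_mod]
    have h : j.val + 1 + (n - 1) = j.val + n := by omega
    rw [h, Nat.add_mod_right, Nat.mod_eq_of_lt j.isLt]
  right_inv j := by
    apply Fin.ext
    show ((j.val + (n - 1)) % n + 1) % n = j.val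
    rw [Nat.mod_add_mod]
    have h : j.val + (n - 1) + 1 = j.val + n := by omega
    rw [h, Nat.add_mod_right, Nat.mod_eq_of_lt j.isLt]

theorem key (G : DiGraph) (hU : G.EdgeUnique) (hMP : G.IsMPDigraph) (m : Finset G.E) :
    G.IsMultipath m ↔
      LinearIndependent (ZMod 2) (fun f : {x : G.E // x ∈ m} => vec G f.val) := by
  classical
  constructor
  · intro hm
    rw [Fintype.linearIndependent_iff]
    intro g hsum i₀
    by_contra hg0
    have hz2 : ∀ a : ZMod 2, a = 0 ∨ a = 1 := by decide
    set S : Finset {x : G.E // x ∈ m} := Finset.univ.filter (fun i => g i = 1) with hSdef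
    have hi₀S : i₀ ∈ S := by
      rcases hz2 (g i₀) with h | h
      · exact absurd h hg0
      · simp [hSdef, h]
    have hS : ∑ i ∈ S, vec G i.val = 0 := by
      have hstep : ∑ i : {x : G.E // x ∈ m}, g i • vec G i.val = ∑ i ∈ S, vec G i.val := by
        rw [hSdef, Finset.sum_filter]
        exact Finset.sum_congr rfl (fun i _ => by rcases hz2 (g i) with h | h <;> simp [h])
      rw [← hstep]
      exact hsum
    have hnl : ∀ i : {x : G.E // x ∈ m}, G.s i.val ≠ G.t i.val := fun i => hm.1 i.val i.2
    -- Step A : every edge of S lies on a coherent cycle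
    have hSf : ∀ j ∈ S, OnCyc G j.val := by
      intro j hj
      by_contra hOnj
      have hev := congrFun hS (Sum.inr j.val)
      rw [Finset.sum_apply, Pi.zero_apply] at hev
      have hterm : ∀ i ∈ S, vec G i.val (Sum.inr j.val) = if i = j then 1 else 0 := by
        intro i _
        simp only [vec]
        rw [if_neg (hnl i)]
        by_cases hOn : OnCyc G i.val
        · rw [if_pos hOn, Sum.elim_inr, if_neg (fun h : i = j => hOnj (h ▸ hOn))]
        · rw [if_neg hOn, Sum.elim_inr]
          have hiff : Cls G i.val j.val ↔ i = j := by
            constructor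
            · intro hcls
              rcases cls_struct G hU hMP.1 hcls with h | ⟨_, _, hsh⟩
              · exact Subtype.ext h
              · rcases hsh with h | h
                · exact Subtype.ext (hm.2.1 i.val i.2 j.val j.2 h)
                · exact Subtype.ext (hm.2.2.1 i.val i.2 j.val j.2 h)
            · rintro rfl
              exact Relation.EqvGen.refl _
          simp only [hiff]
      rw [Finset.sum_congr rfl hterm, Finset.sum_ite_eq' S j (fun _ => 1), if_pos hj] at hev
      exact one_ne_zero hev
    -- even degree propagation
    have hdeg : ∀ v : G.V, (S.filter (fun i => G.t i.val = v)).Nonempty →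
        ∃ i ∈ S, G.s i.val = v := by
      intro v hB
      have hev := congrFun hS (Sum.inl v)
      rw [Finset.sum_apply, Pi.zero_apply] at hev
      have hterm : ∀ i ∈ S, vec G i.val (Sum.inl v) =
          (if G.s i.val = v then 1 else 0) + (if G.t i.val = v then 1 else 0) := by
        intro i hi
        simp only [vec]
        rw [if_neg (hnl i), if_pos (hSf i hi), Sum.elim_inl]
      rw [Finset.sum_congr rfl hterm, Finset.sum_add_distrib, Finset.sum_boole,
        Finset.sum_boole] at hev
      have hA1 : (S.filter (fun i => G.s i.val = v)).card ≤ 1 := by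
        rw [Finset.card_le_one]
        intro a ha b hb
        rw [Finset.mem_filter] at ha hb
        exact Subtype.ext (hm.2.1 a.val a.2 b.val b.2 (ha.2.trans hb.2.symm))
      have hB1 : (S.filter (fun i => G.t i.val = v)).card ≤ 1 := by
        rw [Finset.card_le_one]
        intro a ha b hb
        rw [Finset.mem_filter] at ha hb
        exact Subtype.ext (hm.2.2.1 a.val a.2 b.val b.2 (ha.2.trans hb.2.symm))
      have hd : (2 : ℕ) ∣ ((S.filter (fun i => G.s i.val = v)).card +
          (S.filter (fun i => G.t i.val = v)).card) := by
        rwa [← Nat.cast_add, ZMod.natCast_eq_zero_iff] at hev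
      have hBpos : 0 < (S.filter (fun i => G.t i.val = v)).card := Finset.card_pos.mpr hB
      have hApos : 0 < (S.filter (fun i => G.s i.val = v)).card := by omega
      obtain ⟨i, hi⟩ := Finset.card_pos.mp hApos
      rw [Finset.mem_filter] at hi
      exact ⟨i, hi.1, hi.2⟩
    -- propagate along the cycle through i₀
    obtain ⟨c, hc, hlen, hmem⟩ := hSf i₀ hi₀S
    have npos : 0 < c.length := by omega
    obtain ⟨j₀, hj₀⟩ := List.mem_iff_get.mp hmem
    have hstep : ∀ k : ℕ, ∃ i ∈ S,
        i.val = c.get ⟨(j₀.val + k) % c.length, Nat.mod_lt _ npos⟩ := by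
      intro k
      induction k with
      | zero =>
        refine ⟨i₀, hi₀S, ?_⟩
        rw [← hj₀]
        congr 1
        exact (Fin.ext (by simp [Nat.mod_eq_of_lt j₀.isLt])).symm
      | succ k ih =>
        obtain ⟨i, hiS, hival⟩ := ih
        set jk : Fin c.length := ⟨(j₀.val + k) % c.length, Nat.mod_lt _ npos⟩ with hjk
        have hv : G.t i.val = G.s (c.get (nxt npos jk)) := by
          rw [hival]; exact hc.2.2.2 jk
        obtain ⟨i', hi'S, hsi'⟩ := hdeg (G.s (c.get (nxt npos jk)))
          ⟨i, Finset.mem_filter.mpr ⟨hiS, hv⟩⟩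
        have hi'c : i'.val ∈ c := hMP.2 c hc hlen i'.val
          ⟨c.get (nxt npos jk), List.get_mem _ _, Or.inl hsi'.symm⟩
        obtain ⟨j', hj'⟩ := List.mem_iff_get.mp hi'c
        have hjeq : j' = nxt npos jk := s_get_inj hc (by rw [hj']; exact hsi')
        refine ⟨i', hi'S, ?_⟩
        rw [← hj', hjeq]
        congr 1
        apply Fin.ext
        show (jk.val + 1) % c.length = (j₀.val + (k + 1)) % c.length
        rw [hjk]
        show ((j₀.val + k) % c.length + 1) % c.length = (j₀.val + (k + 1)) % c.length
        rw [Nat.mod_add_mod, Nat.add_assoc]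
    have hall : ∀ f ∈ c, f ∈ m := by
      intro f hf
      obtain ⟨j, hj⟩ := List.mem_iff_get.mp hf
      obtain ⟨i, hiS, hival⟩ := hstep (j.val + c.length - j₀.val)
      have harith : (j₀.val + (j.val + c.length - j₀.val)) % c.length = j.val := by
        have h1 : j₀.val + (j.val + c.length - j₀.val) = j.val + c.length := by
          have := j₀.isLt; omega
        rw [h1, Nat.add_mod_right, Nat.mod_eq_of_lt j.isLt]
      have hif : i.val = f := by
        rw [hival, ← hj]
        congr 1
        exact Fin.ext harith
      exact hif ▸ i.2
    exact hm.2.2.2 ⟨c, hc, hall⟩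
  · intro hli
    have h1 : ∀ e ∈ m, G.s e ≠ G.t e := by
      intro e he hloop
      apply hli.ne_zero ⟨e, he⟩
      show vec G e = 0
      simp only [vec]
      rw [if_pos hloop]
    have h2 : ∀ e ∈ m, ∀ f ∈ m, G.s e = G.s f → e = f := by
      intro e he f hf hs
      by_cases hef : e = f
      · exact hef
      have hOnE : ¬ OnCyc G e := by
        rintro ⟨c, hc, hlen, hec⟩
        have hfc : f ∈ c := hMP.2 c hc hlen f ⟨e, hec, Or.inl hs⟩
        obtain ⟨i, hi⟩ := List.mem_iff_get.mp hec
        obtain ⟨j, hj⟩ := List.mem_iff_get.mp hfc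
        have hij : i = j := s_get_inj hc (by rw [hi, hj]; exact hs)
        exact hef (by rw [← hi, ← hj, hij])
      have hOnF : ¬ OnCyc G f := by
        rintro ⟨c, hc, hlen, hfc⟩
        have hec : e ∈ c := hMP.2 c hc hlen e ⟨f, hfc, Or.inl hs.symm⟩
        obtain ⟨i, hi⟩ := List.mem_iff_get.mp hec
        obtain ⟨j, hj⟩ := List.mem_iff_get.mp hfc
        have hij : i = j := s_get_inj hc (by rw [hi, hj]; exact hs)
        exact hef (by rw [← hi, ← hj, hij])
      have hcls : Cls G e f := Relation.EqvGen.rel _ _ ⟨h1 e he, h1 f hf, Or.inl hs⟩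
      have hveq : vec G e = vec G f := by
        funext z
        simp only [vec]
        rw [if_neg (h1 e he), if_neg (h1 f hf), if_neg hOnE, if_neg hOnF]
        cases z with
        | inl v => rfl
        | inr g =>
          simp only [Sum.elim_inr]
          have hiff : Cls G e g ↔ Cls G f g :=
            ⟨fun h => Relation.EqvGen.trans _ _ _ (Relation.EqvGen.symm _ _ hcls) h,
             fun h => Relation.EqvGen.trans _ _ _ hcls h⟩
          simp only [hiff]
      have := hli.injective (a₁ := ⟨e, he⟩) (a₂ := ⟨f, hf⟩) hveq
      exact congrArg Subtype.val this
    have h3 : ∀ e ∈ m, ∀ f ∈ m, G.t e = G.t f → e = f := by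
      intro e he f hf ht
      by_cases hef : e = f
      · exact hef
      have hOnE : ¬ OnCyc G e := by
        rintro ⟨c, hc, hlen, hec⟩
        obtain ⟨i, hi⟩ := List.mem_iff_get.mp hec
        have npos : 0 < c.length := by omega
        have hfc : f ∈ c := hMP.2 c hc hlen f
          ⟨c.get (nxt npos i), List.get_mem _ _,
            Or.inr (by rw [← t_get' hc npos i, hi, ht])⟩
        obtain ⟨j, hj⟩ := List.mem_iff_get.mp hfc
        have hij : i = j := t_get_inj hc (by rw [hi, hj]; exact ht)
        exact hef (by rw [← hi, ← hj, hij])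
      have hOnF : ¬ OnCyc G f := by
        rintro ⟨c, hc, hlen, hfc⟩
        obtain ⟨j, hj⟩ := List.mem_iff_get.mp hfc
        have npos : 0 < c.length := by omega
        have hec : e ∈ c := hMP.2 c hc hlen e
          ⟨c.get (nxt npos j), List.get_mem _ _,
            Or.inr (by rw [← t_get' hc npos j, hj]; exact ht.symm)⟩
        obtain ⟨i, hi⟩ := List.mem_iff_get.mp hec
        have hij : i = j := t_get_inj hc (by rw [hi, hj]; exact ht)
        exact hef (by rw [← hi, ← hj, hij])
      have hcls : Cls G e f := Relation.EqvGen.rel _ _ ⟨h1 e he, h1 f hf, Or.inr ht⟩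
      have hveq : vec G e = vec G f := by
        funext z
        simp only [vec]
        rw [if_neg (h1 e he), if_neg (h1 f hf), if_neg hOnE, if_neg hOnF]
        cases z with
        | inl v => rfl
        | inr g =>
          simp only [Sum.elim_inr]
          have hiff : Cls G e g ↔ Cls G f g :=
            ⟨fun h => Relation.EqvGen.trans _ _ _ (Relation.EqvGen.symm _ _ hcls) h,
             fun h => Relation.EqvGen.trans _ _ _ hcls h⟩
          simp only [hiff]
      have := hli.injective (a₁ := ⟨e, he⟩) (a₂ := ⟨f, hf⟩) hveq
      exact congrArg Subtype.val this
    have h4 : ¬∃ c : List G.E, G.IsCohCycle c ∧ ∀ g ∈ c, g ∈ m := by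
      rintro ⟨c, hc, hsub⟩
      have npos : 0 < c.length := List.length_pos_iff.mpr hc.1
      by_cases hn1 : c.length = 1
      · apply h1 (c.get ⟨0, npos⟩) (hsub _ (List.get_mem _ _))
        have h := t_get' hc npos ⟨0, npos⟩
        have hidx : nxt npos (⟨0, npos⟩ : Fin c.length) = ⟨0, npos⟩ := by
          apply Fin.ext
          show (0 + 1) % c.length = 0
          simp [hn1]
        rw [hidx] at h
        exact h.symm
      have hlen : 2 ≤ c.length := by omega
      rw [Fintype.linearIndependent_iff] at hli
      have hsum : ∑ i : {x : G.E // x ∈ m},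
          (if i.val ∈ c then (1 : ZMod 2) else 0) • vec G i.val = 0 := by
        have e1 : ∑ i : {x : G.E // x ∈ m},
            (if i.val ∈ c then (1 : ZMod 2) else 0) • vec G i.val
            = ∑ i ∈ Finset.univ.filter (fun i : {x : G.E // x ∈ m} => i.val ∈ c),
                vec G i.val := by
          rw [Finset.sum_filter]
          apply Finset.sum_congr rfl
          intro i _
          by_cases h : i.val ∈ c <;> simp [h]
        have e2 : ∑ j : Fin c.length, vec G (c.get j)
            = ∑ i ∈ Finset.univ.filter (fun i : {x : G.E // x ∈ m} => i.val ∈ c),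
                vec G i.val := by
          apply Finset.sum_bij (fun (j : Fin c.length) _ =>
            (⟨c.get j, hsub _ (List.get_mem _ _)⟩ : {x : G.E // x ∈ m}))
          · intro j _
            exact Finset.mem_filter.mpr ⟨Finset.mem_univ _, List.get_mem _ _⟩
          · intro j _ j' _ h
            have := congrArg Subtype.val h
            exact List.nodup_iff_injective_get.mp hc.2.1 this
          · intro b hb
            obtain ⟨j, hj⟩ := List.mem_iff_get.mp (Finset.mem_filter.mp hb).2
            exact ⟨j, Finset.mem_univ _, Subtype.ext hj⟩
          · intro j _
            rfl
        rw [e1, ← e2]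
        have hterm : ∀ j : Fin c.length, vec G (c.get j) =
            Sum.elim (fun v => (if G.s (c.get j) = v then (1 : ZMod 2) else 0)
              + (if G.t (c.get j) = v then 1 else 0)) (fun _ => (0 : ZMod 2)) := by
          intro j
          have hOn : OnCyc G (c.get j) := ⟨c, hc, hlen, List.get_mem _ _⟩
          simp only [vec]
          rw [if_neg (cyc_nonloop hc hlen j), if_pos hOn]
        funext z
        rw [Finset.sum_apply]
        rw [Finset.sum_congr rfl (fun j _ => congrFun (hterm j) z)]
        cases z with
        | inr g => simp
        | inl v =>
          simp only [Sum.elim_inl]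
          rw [Finset.sum_add_distrib]
          have hswap : ∑ j : Fin c.length, (if G.t (c.get j) = v then (1 : ZMod 2) else 0)
              = ∑ j : Fin c.length, (if G.s (c.get j) = v then (1 : ZMod 2) else 0) := by
            apply Fintype.sum_equiv (rotEquiv npos)
            intro j
            rw [t_get hc]
            rfl
          rw [hswap]
          rw [CharTwo.add_self_eq_zero]
          rfl
      have hone := hli (fun i => if i.val ∈ c then 1 else 0) hsum
        ⟨c.get ⟨0, npos⟩, hsub _ (List.get_mem _ _)⟩
      rw [if_pos (List.get_mem _ _)] at hone
      exact one_ne_zero hone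
    exact ⟨h1, h2, h3, h4⟩

end MPAux
/-- The multipath matroid of an MP-digraph is binary, i.e.
representable over the field with two elements. -/
theorem multipath_matroid_binary (G : DiGraph) (hU : G.EdgeUnique)
    (hMP : G.IsMPDigraph) : DiGraph.RepOver G (ZMod 2) := by
  classical
  let eqv : Fin (Fintype.card (G.V ⊕ G.E)) ≃ (G.V ⊕ G.E) :=
    (Fintype.equivFin (G.V ⊕ G.E)).symm
  refine ⟨Fintype.card (G.V ⊕ G.E), Matrix.of (fun i e => MPAux.vec G e (eqv i)), ?_⟩
  intro m
  rw [MPAux.key G hU hMP m]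
  have hcomp : (fun f : {x : G.E // x ∈ m} =>
      (Matrix.of (fun i e => MPAux.vec G e (eqv i))).transpose f.val)
      = (⇑(LinearEquiv.funCongrLeft (ZMod 2) (ZMod 2) eqv).toLinearMap
          ∘ (fun f : {x : G.E // x ∈ m} => MPAux.vec G f.val)) := by
    funext f i
    rfl
  rw [hcomp]
  exact (LinearMap.linearIndependent_iff _ (LinearEquiv.ker _)).symm
end
end

section
/- Let G be a connected MP-digraph and let G_1, …, G_k denote its dynamical modules. Then M_G = M_{G_1} ⊕ … ⊕ M_{G_k}. -/
set_option autoImplicit false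

noncomputable section

attribute [local instance] Classical.propDecidable

namespace MPAux
open DiGraph

lemma stableIn_iff (G : DiGraph) (A : Finset G.E) (v : G.V) :
    StableIn G A v ↔ (∀ g ∈ A, G.t g ≠ v) ∨ (∀ g ∈ A, G.s g ≠ v) := by
  unfold StableIn indegIn outdegIn
  rw [Finset.card_eq_zero, Finset.card_eq_zero, Finset.filter_eq_empty_iff,
    Finset.filter_eq_empty_iff]

lemma unstable_iff (G : DiGraph) (v : G.V) :
    UnstableG G v ↔ (∃ g : G.E, G.t g = v) ∧ (∃ g : G.E, G.s g = v) := by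
  unfold UnstableG indeg outdeg indegIn outdegIn
  rw [Finset.card_pos, Finset.card_pos]
  constructor
  · rintro ⟨⟨g, hg⟩, ⟨f, hf⟩⟩
    simp only [Finset.mem_filter] at hg hf
    exact ⟨⟨g, hg.2⟩, ⟨f, hf.2⟩⟩
  · rintro ⟨⟨g, hg⟩, ⟨f, hf⟩⟩
    exact ⟨⟨g, by simp [hg]⟩, ⟨f, by simp [hf]⟩⟩

lemma multipath_subset (G : DiGraph) {m m' : Finset G.E} (h : IsMultipath G m)
    (hsub : m' ⊆ m) : IsMultipath G m' := by
  obtain ⟨h1, h2, h3, h4⟩ := h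
  refine ⟨fun e he => h1 e (hsub he), fun e he f hf => h2 e (hsub he) f (hsub hf),
    fun e he f hf => h3 e (hsub he) f (hsub hf), ?_⟩
  rintro ⟨c, hc, hcm⟩
  exact h4 ⟨c, hc, fun g hg => hsub (hcm g hg)⟩

lemma univ_region (G : DiGraph) (hconn : ConnectedD G) (e : G.E) :
    IsDynRegion G (Finset.univ : Finset G.E) := by
  refine ⟨⟨e, Finset.mem_univ e⟩, ?_, ?_, ?_⟩
  · intro a _ b _
    refine Relation.EqvGen.mono ?_ _ _ (hconn.2 (G.s a) (G.s b))
    rintro x y ⟨g, hg⟩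
    exact ⟨g, Finset.mem_univ g, hg⟩
  · intro v _ hinc
    obtain ⟨g, hg, -⟩ := hinc
    rw [Finset.sdiff_self] at hg
    exact absurd hg (Finset.notMem_empty g)
  · intro c _ _ g _
    exact Finset.mem_univ g

lemma subregion_split (G : DiGraph) (R R' : Finset G.E) (hR : IsDynRegion G R)
    (hR' : IsDynRegion G R') (hsub : R' ⊆ R) (e : G.E) (heR : e ∈ R) (heR' : e ∉ R') :
    ∃ R'' : Finset G.E, IsDynRegion G R'' ∧ e ∈ R'' ∧ R'' ⊆ R ∧ R'' ≠ R := by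
  classical
  set C : Finset G.E := R \ R' with hCdef
  have heC : e ∈ C := Finset.mem_sdiff.2 ⟨heR, heR'⟩
  set Reach : G.V → Prop := fun v => Relation.EqvGen (adjIn G C) (G.s e) v with hReach
  set R'' : Finset G.E := C.filter (fun g => Reach (G.s g)) with hR''def
  have adj_st : ∀ g ∈ C, adjIn G C (G.s g) (G.t g) := fun g hg => ⟨g, hg, Or.inl ⟨rfl, rfl⟩⟩
  have reach_iff : ∀ g ∈ C, (Reach (G.s g) ↔ Reach (G.t g)) := fun g hg =>
    ⟨fun h => Relation.EqvGen.trans _ _ _ h (Relation.EqvGen.rel _ _ (adj_st g hg)),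
     fun h => Relation.EqvGen.trans _ _ _ h
       (Relation.EqvGen.symm _ _ (Relation.EqvGen.rel _ _ (adj_st g hg)))⟩
  have mem_R'' : ∀ g ∈ C, ∀ v : G.V, (G.s g = v ∨ G.t g = v) → Reach v → g ∈ R'' := by
    intro g hg v hv hreach
    refine Finset.mem_filter.2 ⟨hg, ?_⟩
    rcases hv with h | h
    · rwa [h]
    · exact (reach_iff g hg).2 (h ▸ hreach)
  have reach_of_mem : ∀ g ∈ R'', ∀ v : G.V, (G.s g = v ∨ G.t g = v) → Reach v := by
    intro g hg v hv
    obtain ⟨hgC, hre⟩ := Finset.mem_filter.1 hg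
    rcases hv with h | h
    · exact h ▸ hre
    · exact h ▸ (reach_iff g hgC).1 hre
  have transfer : ∀ a b : G.V, Relation.EqvGen (adjIn G C) a b →
      (Reach a ∨ Reach b) → Relation.EqvGen (adjIn G R'') a b := by
    intro a b h
    induction h with
    | rel a b hab =>
      intro hr
      obtain ⟨g, hgC, hge⟩ := hab
      have hra : Reach a ∧ Reach b := by
        rcases hr with hr | hr
        · exact ⟨hr, Relation.EqvGen.trans _ _ _ hr (Relation.EqvGen.rel _ _ ⟨g, hgC, hge⟩)⟩
        · exact ⟨Relation.EqvGen.trans _ _ _ hr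
            (Relation.EqvGen.symm _ _ (Relation.EqvGen.rel _ _ ⟨g, hgC, hge⟩)), hr⟩
      have hgmem : g ∈ R'' := by
        rcases hge with ⟨h1, -⟩ | ⟨h1, -⟩
        · exact mem_R'' g hgC a (Or.inl h1) hra.1
        · exact mem_R'' g hgC b (Or.inl h1) hra.2
      exact Relation.EqvGen.rel _ _ ⟨g, hgmem, hge⟩
    | refl a => exact fun _ => Relation.EqvGen.refl a
    | symm a b hab ih => exact fun hr => Relation.EqvGen.symm _ _ (ih hr.symm)
    | trans a b c hab hbc ih1 ih2 =>
      intro hr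
      rcases hr with hr | hr
      · have hb : Reach b := Relation.EqvGen.trans _ _ _ hr hab
        exact Relation.EqvGen.trans _ _ _ (ih1 (Or.inl hr)) (ih2 (Or.inl hb))
      · have hb : Reach b := Relation.EqvGen.trans _ _ _ hr (Relation.EqvGen.symm _ _ hbc)
        exact Relation.EqvGen.trans _ _ _ (ih1 (Or.inr hb)) (ih2 (Or.inr hr))
  have heR'' : e ∈ R'' := Finset.mem_filter.2 ⟨heC, Relation.EqvGen.refl _⟩
  have hsubR : R'' ⊆ R := (Finset.filter_subset _ _).trans (Finset.sdiff_subset)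
  have hneR : R'' ≠ R := by
    obtain ⟨x, hx⟩ := hR'.1
    intro hEq
    have hxR'' : x ∈ R'' := hEq ▸ hsub hx
    exact (Finset.mem_sdiff.1 (Finset.mem_filter.1 hxR'').1).2 hx
  -- edge-connectedness of R''
  have hec : EdgeConnected G R'' := by
    intro a ha b hb
    have hra : Reach (G.s a) := reach_of_mem a ha _ (Or.inl rfl)
    have hrb : Reach (G.s b) := reach_of_mem b hb _ (Or.inl rfl)
    exact transfer _ _
      (Relation.EqvGen.trans _ _ _ (Relation.EqvGen.symm _ _ hra) hrb) (Or.inl hra)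
  -- boundary condition
  have hbd : ∀ v : G.V, IncidentTo G R'' v → IncidentTo G (Finset.univ \ R'') v →
      UnstableG G v ∧ StableIn G R'' v ∧ StableIn G (Finset.univ \ R'') v := by
    intro v hinc hinc'
    obtain ⟨e1, he1R'', he1v⟩ := hinc
    obtain ⟨e2, he2, he2v⟩ := hinc'
    have he2R'' : e2 ∉ R'' := (Finset.mem_sdiff.1 he2).2
    have hreachv : Reach v := reach_of_mem e1 he1R'' v he1v
    have hCat : ∀ g ∈ C, (G.s g = v ∨ G.t g = v) → g ∈ R'' :=
      fun g hg hgv => mem_R'' g hg v hgv hreachv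
    have he1C : e1 ∈ C := (Finset.mem_filter.1 he1R'').1
    have he1R : e1 ∈ R := (Finset.mem_sdiff.1 he1C).1
    have he1nR' : e1 ∉ R' := (Finset.mem_sdiff.1 he1C).2
    by_cases hA : ∃ g ∈ R', G.s g = v ∨ G.t g = v
    · have hincR' : IncidentTo G R' v := hA
      have hincCR' : IncidentTo G (Finset.univ \ R') v :=
        ⟨e1, Finset.mem_sdiff.2 ⟨Finset.mem_univ _, he1nR'⟩, he1v⟩
      obtain ⟨hu', hst1, hst2⟩ := hR'.2.2.1 v hincR' hincCR'
      by_cases hB : ∃ g : G.E, g ∉ R ∧ (G.s g = v ∨ G.t g = v)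
      · exfalso
        obtain ⟨g2, hg2R, hg2v⟩ := hB
        have hincR : IncidentTo G R v := ⟨e1, he1R, he1v⟩
        have hincCR : IncidentTo G (Finset.univ \ R) v :=
          ⟨g2, Finset.mem_sdiff.2 ⟨Finset.mem_univ _, hg2R⟩, hg2v⟩
        obtain ⟨hu, hst3, hst4⟩ := hR.2.2.1 v hincR hincCR
        rw [stableIn_iff] at hst2 hst3
        rw [unstable_iff] at hu
        obtain ⟨⟨gin, hgin⟩, ⟨gout, hgout⟩⟩ := hu
        rcases hst2 with h2 | h2 <;> rcases hst3 with h3 | h3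
        · by_cases hginR : gin ∈ R
          · exact h3 gin hginR hgin
          · exact h2 gin
              (Finset.mem_sdiff.2 ⟨Finset.mem_univ _, fun h => hginR (hsub h)⟩) hgin
        · rcases he1v with h | h
          · exact h3 e1 he1R h
          · exact h2 e1 (Finset.mem_sdiff.2 ⟨Finset.mem_univ _, he1nR'⟩) h
        · rcases he1v with h | h
          · exact h2 e1 (Finset.mem_sdiff.2 ⟨Finset.mem_univ _, he1nR'⟩) h
          · exact h3 e1 he1R h
        · by_cases hgoutR : gout ∈ R
          · exact h3 gout hgoutR hgout
          · exact h2 gout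
              (Finset.mem_sdiff.2 ⟨Finset.mem_univ _, fun h => hgoutR (hsub h)⟩) hgout
      · refine ⟨hu', ?_, ?_⟩
        · rw [stableIn_iff] at hst2 ⊢
          have hsubCR' : ∀ g ∈ R'', g ∈ Finset.univ \ R' := fun g hg =>
            Finset.mem_sdiff.2 ⟨Finset.mem_univ _,
              (Finset.mem_sdiff.1 (Finset.mem_filter.1 hg).1).2⟩
          rcases hst2 with h | h
          · exact Or.inl fun g hg => h g (hsubCR' g hg)
          · exact Or.inr fun g hg => h g (hsubCR' g hg)
        · rw [stableIn_iff] at hst1 ⊢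
          have key : ∀ g ∈ Finset.univ \ R'', (G.s g = v ∨ G.t g = v) → g ∈ R' := by
            intro g hg hgv
            have hgR'' : g ∉ R'' := (Finset.mem_sdiff.1 hg).2
            by_cases hgR : g ∈ R
            · by_cases hgR' : g ∈ R'
              · exact hgR'
              · exact absurd (hCat g (Finset.mem_sdiff.2 ⟨hgR, hgR'⟩) hgv) hgR''
            · exact absurd ⟨g, hgR, hgv⟩ hB
          rcases hst1 with h | h
          · exact Or.inl fun g hg hgt => h g (key g hg (Or.inr hgt)) hgt
          · exact Or.inr fun g hg hgs => h g (key g hg (Or.inl hgs)) hgs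
    · have hg2R : e2 ∉ R := by
        intro hg2R
        by_cases hg2R' : e2 ∈ R'
        · exact hA ⟨e2, hg2R', he2v⟩
        · exact he2R'' (hCat e2 (Finset.mem_sdiff.2 ⟨hg2R, hg2R'⟩) he2v)
      have hincR : IncidentTo G R v := ⟨e1, he1R, he1v⟩
      have hincCR : IncidentTo G (Finset.univ \ R) v :=
        ⟨e2, Finset.mem_sdiff.2 ⟨Finset.mem_univ _, hg2R⟩, he2v⟩
      obtain ⟨hu, hst3, hst4⟩ := hR.2.2.1 v hincR hincCR
      refine ⟨hu, ?_, ?_⟩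
      · rw [stableIn_iff] at hst3 ⊢
        have hsub'' : ∀ g ∈ R'', g ∈ R := fun g hg => hsubR hg
        rcases hst3 with h | h
        · exact Or.inl fun g hg => h g (hsub'' g hg)
        · exact Or.inr fun g hg => h g (hsub'' g hg)
      · rw [stableIn_iff] at hst4 ⊢
        have key : ∀ g ∈ Finset.univ \ R'', (G.s g = v ∨ G.t g = v) →
            g ∈ Finset.univ \ R := by
          intro g hg hgv
          have hgR'' : g ∉ R'' := (Finset.mem_sdiff.1 hg).2
          refine Finset.mem_sdiff.2 ⟨Finset.mem_univ _, fun hgR => ?_⟩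
          by_cases hgR' : g ∈ R'
          · exact hA ⟨g, hgR', hgv⟩
          · exact hgR'' (hCat g (Finset.mem_sdiff.2 ⟨hgR, hgR'⟩) hgv)
        rcases hst4 with h | h
        · exact Or.inl fun g hg hgt => h g (key g hg (Or.inr hgt)) hgt
        · exact Or.inr fun g hg hgs => h g (key g hg (Or.inl hgs)) hgs
  -- cycle condition
  have hcyc : ∀ c : List G.E, IsCohCycle G c → (∃ g ∈ c, g ∈ R'') → ∀ g ∈ c, g ∈ R'' := by
    rintro c hc ⟨g0, hg0c, hg0R''⟩ g hg
    have hg0C : g0 ∈ C := (Finset.mem_filter.1 hg0R'').1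
    have hallR : ∀ g' ∈ c, g' ∈ R := hR.2.2.2 c hc ⟨g0, hg0c, (Finset.mem_sdiff.1 hg0C).1⟩
    have hallC : ∀ g' ∈ c, g' ∈ C := by
      intro g' hg'
      refine Finset.mem_sdiff.2 ⟨hallR g' hg', fun hg'R' => ?_⟩
      exact (Finset.mem_sdiff.1 hg0C).2 (hR'.2.2.2 c hc ⟨g', hg', hg'R'⟩ g0 hg0c)
    obtain ⟨hne0, -, -, hcyc'⟩ := hc
    have hlen : 0 < c.length := List.length_pos_iff.2 hne0
    obtain ⟨i0, hi0⟩ := List.mem_iff_get.1 hg0c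
    have hget : ∀ (a b : Fin c.length), a.val = b.val → c.get a = c.get b := by
      intro a b hab
      congr 1
      exact Fin.ext hab
    have hstep : ∀ j : ℕ,
        Reach (G.s (c.get ⟨(i0.val + j) % c.length, Nat.mod_lt _ hlen⟩)) := by
      intro j
      induction j with
      | zero =>
        have h0 : c.get ⟨(i0.val + 0) % c.length, Nat.mod_lt _ hlen⟩ = g0 := by
          rw [hget _ i0 (by simp [Nat.mod_eq_of_lt i0.isLt])]
          exact hi0
        rw [h0]
        exact (Finset.mem_filter.1 hg0R'').2
      | succ j ih =>
        set i : Fin c.length := ⟨(i0.val + j) % c.length, Nat.mod_lt _ hlen⟩ with hi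
        have hmemC : c.get i ∈ C := hallC _ (List.mem_iff_get.2 ⟨i, rfl⟩)
        have ht : Reach (G.t (c.get i)) := (reach_iff _ hmemC).1 ih
        have hcy := hcyc' i
        rw [hcy] at ht
        have hidx : ((i.val + 1) % c.length) = (i0.val + (j + 1)) % c.length := by
          show ((i0.val + j) % c.length + 1) % c.length = _
          rw [Nat.mod_add_mod, Nat.add_assoc]
        rw [hget _ ⟨(i0.val + (j + 1)) % c.length, Nat.mod_lt _ hlen⟩ hidx] at ht
        exact ht
    have hallreach : ∀ i : Fin c.length, Reach (G.s (c.get i)) := by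
      intro i
      have h := hstep (i.val + c.length - i0.val)
      have hval : (i0.val + (i.val + c.length - i0.val)) % c.length = i.val := by
        have h1 : i0.val + (i.val + c.length - i0.val) = i.val + c.length := by
          have := i0.isLt
          omega
        rw [h1, Nat.add_mod_right, Nat.mod_eq_of_lt i.isLt]
      rw [hget _ i hval] at h
      exact h
    obtain ⟨i, hi⟩ := List.mem_iff_get.1 hg
    exact Finset.mem_filter.2 ⟨hallC g hg, hi ▸ hallreach i⟩
  exact ⟨R'', ⟨⟨e, heR''⟩, hec, hbd, hcyc⟩, heR'', hsubR, hneR⟩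

lemma exists_module (G : DiGraph) (hconn : ConnectedD G) (e : G.E) :
    ∃ R : Finset G.E, IsDynModule G R ∧ e ∈ R := by
  classical
  set S := Finset.univ.powerset.filter
    (fun R : Finset G.E => IsDynRegion G R ∧ e ∈ R) with hSdef
  have hSne : S.Nonempty := ⟨Finset.univ, by
    simp only [hSdef, Finset.mem_filter, Finset.mem_powerset]
    exact ⟨Finset.subset_univ _, univ_region G hconn e, Finset.mem_univ e⟩⟩
  obtain ⟨R, hRS, hmin⟩ := S.exists_min_image Finset.card hSne
  simp only [hSdef, Finset.mem_filter, Finset.mem_powerset] at hRS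
  obtain ⟨-, hReg, heR⟩ := hRS
  refine ⟨R, ⟨hReg, ?_⟩, heR⟩
  intro R' hsub hR'
  by_contra hne
  have hlt : ∀ R'' : Finset G.E, IsDynRegion G R'' → e ∈ R'' → R''.card < R.card → False := by
    intro R'' h1 h2 h3
    have hmem : R'' ∈ S := by
      simp only [hSdef, Finset.mem_filter, Finset.mem_powerset]
      exact ⟨Finset.subset_univ _, h1, h2⟩
    exact absurd (hmin R'' hmem) (not_le.2 h3)
  by_cases heR' : e ∈ R'
  · exact hlt R' hR' heR'
      (Finset.card_lt_card (Finset.ssubset_iff_subset_ne.2 ⟨hsub, hne⟩))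
  · obtain ⟨R'', h1, h2, h3, h4⟩ := subregion_split G R R' hReg hR' hsub e heR heR'
    exact hlt R'' h1 h2
      (Finset.card_lt_card (Finset.ssubset_iff_subset_ne.2 ⟨h3, h4⟩))

end MPAux

open DiGraph in
/-- For a connected MP-digraph `G` with dynamical modules
`G_1, …, G_k`, the multipath matroid decomposes as
`M_G = M_{G_1} ⊕ ⋯ ⊕ M_{G_k}`: since the edge sets of the dynamical modules
partition `E(G)`, a set of edges is independent in `M_G` iff its intersection
with each dynamical module is independent in the multipath matroid of that
module. -/
theorem multipath_matroid_direct_sum_modules (G : DiGraph) (hU : G.EdgeUnique)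
    (hMP : G.IsMPDigraph) (hconn : G.ConnectedD) (m : Finset G.E) :
    G.IsMultipath m ↔
      ∀ R : Finset G.E, IsDynModule G R → G.IsMultipath (m ∩ R) := by
  constructor
  · intro hm R _
    exact MPAux.multipath_subset G hm Finset.inter_subset_left
  · intro h
    refine ⟨?_, ?_, ?_, ?_⟩
    · intro f hf
      obtain ⟨R, hR, hfR⟩ := MPAux.exists_module G hconn f
      exact (h R hR).1 f (Finset.mem_inter.2 ⟨hf, hfR⟩)
    · intro a ha b hb hst
      obtain ⟨R, hR, haR⟩ := MPAux.exists_module G hconn a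
      by_cases hbR : b ∈ R
      · exact (h R hR).2.1 a (Finset.mem_inter.2 ⟨ha, haR⟩) b
          (Finset.mem_inter.2 ⟨hb, hbR⟩) hst
      · exfalso
        have hinc1 : IncidentTo G R (G.s a) := ⟨a, haR, Or.inl rfl⟩
        have hinc2 : IncidentTo G (Finset.univ \ R) (G.s a) :=
          ⟨b, Finset.mem_sdiff.2 ⟨Finset.mem_univ _, hbR⟩, Or.inl hst.symm⟩
        obtain ⟨hu, hst1, hst2⟩ := hR.1.2.2.1 _ hinc1 hinc2
        rw [MPAux.unstable_iff] at hu
        rw [MPAux.stableIn_iff] at hst1 hst2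
        obtain ⟨⟨gin, hgin⟩, -⟩ := hu
        rcases hst1 with h1 | h1
        · rcases hst2 with h2 | h2
          · by_cases hginR : gin ∈ R
            · exact h1 gin hginR hgin
            · exact h2 gin (Finset.mem_sdiff.2 ⟨Finset.mem_univ _, hginR⟩) hgin
          · exact h2 b (Finset.mem_sdiff.2 ⟨Finset.mem_univ _, hbR⟩) hst.symm
        · exact h1 a haR rfl
    · intro a ha b hb hst
      obtain ⟨R, hR, haR⟩ := MPAux.exists_module G hconn a
      by_cases hbR : b ∈ R
      · exact (h R hR).2.2.1 a (Finset.mem_inter.2 ⟨ha, haR⟩) b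
          (Finset.mem_inter.2 ⟨hb, hbR⟩) hst
      · exfalso
        have hinc1 : IncidentTo G R (G.t a) := ⟨a, haR, Or.inr rfl⟩
        have hinc2 : IncidentTo G (Finset.univ \ R) (G.t a) :=
          ⟨b, Finset.mem_sdiff.2 ⟨Finset.mem_univ _, hbR⟩, Or.inr hst.symm⟩
        obtain ⟨hu, hst1, hst2⟩ := hR.1.2.2.1 _ hinc1 hinc2
        rw [MPAux.unstable_iff] at hu
        rw [MPAux.stableIn_iff] at hst1 hst2
        obtain ⟨-, ⟨gout, hgout⟩⟩ := hu
        rcases hst1 with h1 | h1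
        · exact h1 a haR rfl
        · rcases hst2 with h2 | h2
          · exact h2 b (Finset.mem_sdiff.2 ⟨Finset.mem_univ _, hbR⟩) hst.symm
          · by_cases hgoutR : gout ∈ R
            · exact h1 gout hgoutR hgout
            · exact h2 gout (Finset.mem_sdiff.2 ⟨Finset.mem_univ _, hgoutR⟩) hgout
    · rintro ⟨c, hc, hcm⟩
      obtain ⟨g0, hg0⟩ : ∃ g0, g0 ∈ c := List.exists_mem_of_ne_nil c hc.1
      obtain ⟨R, hR, hg0R⟩ := MPAux.exists_module G hconn g0
      have hall : ∀ g ∈ c, g ∈ R := hR.1.2.2.2 c hc ⟨g0, hg0, hg0R⟩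
      exact (h R hR).2.2.2 ⟨c, hc, fun g hg => Finset.mem_inter.2 ⟨hcm g hg, hall g hg⟩⟩
end
end
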